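/- For Hermitian positive definite matrices W and E of size N, tr(W E) − log det(W) ≥ tr(E^{-1} E) − log det(E^{-1}) = N + log det(E), with equality iff W = E^{-1}. -/

import Mathlib

open Matrix ComplexOrder

lemma trace_eq_sum_eig {N : ℕ} {M : Matrix (Fin N) (Fin N) ℂ} (hM : M.IsHermitian) :
    M.trace = ∑ i, (hM.eigenvalues i : ℂ) := by
  conv_lhs => rw [hM.spectral_theorem]
  rw [Unitary.conjStarAlgAut_apply, trace_mul_cycle, Unitary.coe_star_mul_self, one_mul,
    trace_diagonal]
  rfl

lemma core {N : ℕ} {M : Matrix (Fin N) (Fin N) ℂ} (hM : M.PosDef) :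
    (N : ℝ) ≤ M.trace.re - Real.log M.det.re ∧
      (M.trace.re - Real.log M.det.re = (N : ℝ) ↔ M = 1) := by
  have hlam : ∀ i, 0 < hM.1.eigenvalues i := hM.eigenvalues_pos
  have htr : M.trace.re = ∑ i, hM.1.eigenvalues i := by
    rw [trace_eq_sum_eig hM.1]
    simp
  have hdet : M.det.re = ∏ i, hM.1.eigenvalues i := by
    rw [hM.1.det_eq_prod_eigenvalues]
    norm_cast
  have hlog : Real.log M.det.re = ∑ i, Real.log (hM.1.eigenvalues i) := by
    rw [hdet, Real.log_prod fun i _ => (hlam i).ne']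
  have hterm : ∀ i : Fin N, (1:ℝ) ≤ hM.1.eigenvalues i - Real.log (hM.1.eigenvalues i) := by
    intro i
    have := Real.log_le_sub_one_of_pos (hlam i)
    linarith
  have key : M.trace.re - Real.log M.det.re
      = ∑ i, (hM.1.eigenvalues i - Real.log (hM.1.eigenvalues i)) := by
    rw [htr, hlog, Finset.sum_sub_distrib]
  have hineq : (N : ℝ) ≤ M.trace.re - Real.log M.det.re := by
    rw [key]
    calc (N:ℝ) = ∑ _i : Fin N, (1:ℝ) := by simp
    _ ≤ _ := Finset.sum_le_sum fun i _ => hterm i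
  refine ⟨hineq, ?_, ?_⟩
  · intro heq
    have hall : ∀ i, hM.1.eigenvalues i = 1 := by
      by_contra hc
      push_neg at hc
      obtain ⟨j, hj⟩ := hc
      have hstrict : (1:ℝ) < hM.1.eigenvalues j - Real.log (hM.1.eigenvalues j) := by
        have := Real.log_lt_sub_one_of_pos (hlam j) hj
        linarith
      have : (N:ℝ) < M.trace.re - Real.log M.det.re := by
        rw [key]
        calc (N:ℝ) = ∑ _i : Fin N, (1:ℝ) := by simp
        _ < _ := Finset.sum_lt_sum (fun i _ => hterm i) ⟨j, Finset.mem_univ j, hstrict⟩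
      linarith [heq]
    conv_lhs => rw [hM.1.spectral_theorem]
    have : Matrix.diagonal (RCLike.ofReal ∘ hM.1.eigenvalues) = (1 : Matrix (Fin N) (Fin N) ℂ) := by
      have h1 : (RCLike.ofReal ∘ hM.1.eigenvalues : Fin N → ℂ) = 1 := by
        funext i; simp [hall i]
      rw [h1]; exact diagonal_one
    rw [this, Unitary.conjStarAlgAut_apply, mul_one, (Matrix.mem_unitaryGroup_iff).mp (hM.1.eigenvectorUnitary).2]
  · intro h
    subst h
    simp

/-- For Hermitian positive definite `W`, `E`:
`tr(W E) - log det W ≥ N + log det E`, with equality iff `W = E⁻¹`. -/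
theorem stmt_13 {N : ℕ} (W E : Matrix (Fin N) (Fin N) ℂ)
    (hW : W.PosDef) (hE : E.PosDef) :
    (N : ℝ) + Real.log E.det.re ≤ (W * E).trace.re - Real.log W.det.re ∧
    ((W * E).trace.re - Real.log W.det.re = (N : ℝ) + Real.log E.det.re
      ↔ W = E⁻¹) := by
  open scoped MatrixOrder in set S := CFC.sqrt E with hSdef
  have hSps : S.PosSemidef := open scoped MatrixOrder in (CFC.sqrt_nonneg E).posSemidef
  have hSH : S.IsHermitian := hSps.1
  have hSS : S * S = E := open scoped MatrixOrder in CFC.sqrt_mul_sqrt_self E hE.posSemidef.nonneg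
  have hdetS : S.det * S.det = E.det := by rw [← det_mul, hSS]
  have hE0 : E.det ≠ 0 := hE.det_pos.ne'
  have hS0 : S.det ≠ 0 := fun h => hE0 (by rw [← hdetS, h, mul_zero])
  have hSu : IsUnit S.det := hS0.isUnit
  have hSinv : S⁻¹ * S = 1 := nonsing_inv_mul S hSu
  have hSinv' : S * S⁻¹ = 1 := mul_nonsing_inv S hSu
  -- M := S * W * S is PosDef
  have hM : (S * W * S).PosDef := by
    refine Matrix.PosDef.of_dotProduct_mulVec_pos ?_ ?_
    · have := Matrix.isHermitian_conjTranspose_mul_mul S hW.1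
      rwa [show Sᴴ = S from hSH] at this
    · intro x hx
      have hSx : S *ᵥ x ≠ 0 := by
        intro h
        exact hx ((mulVec_injective_iff_isUnit.2 ((isUnit_iff_isUnit_det S).2 hSu))
          (by rw [h, mulVec_zero]))
      have e1 : star (S *ᵥ x) = star x ᵥ* S := by
        rw [star_mulVec, show Sᴴ = S from hSH]
      have e2 : star x ⬝ᵥ ((S * W * S) *ᵥ x)
          = star (S *ᵥ x) ⬝ᵥ (W *ᵥ (S *ᵥ x)) := by
        rw [mul_assoc, ← mulVec_mulVec, dotProduct_mulVec, ← e1, ← mulVec_mulVec]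
      rw [e2]
      exact hW.dotProduct_mulVec_pos hSx
  have htrace : (S * W * S).trace = (W * E).trace := by
    rw [mul_assoc, trace_mul_comm, mul_assoc, hSS]
  have hdetM : (S * W * S).det = W.det * E.det := by
    rw [det_mul, det_mul, ← hdetS]; ring
  -- real parts of determinants
  have hWre : 0 < W.det.re ∧ W.det.im = 0 := by
    have := hW.det_pos
    rw [Complex.lt_def] at this
    simpa using ⟨this.1, this.2.symm⟩
  have hEre : 0 < E.det.re ∧ E.det.im = 0 := by
    have := hE.det_pos
    rw [Complex.lt_def] at this
    simpa using ⟨this.1, this.2.symm⟩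
  have hMdetre : (S * W * S).det.re = W.det.re * E.det.re := by
    rw [hdetM, Complex.mul_re, hWre.2, hEre.2]
    ring
  have hlogM : Real.log (S * W * S).det.re = Real.log W.det.re + Real.log E.det.re := by
    rw [hMdetre, Real.log_mul hWre.1.ne' hEre.1.ne']
  have hrel : (S * W * S).trace.re - Real.log (S * W * S).det.re
      = (W * E).trace.re - Real.log W.det.re - Real.log E.det.re := by
    rw [htrace, hlogM]; ring
  obtain ⟨hineq, hiff⟩ := core hM
  have hWE : S * W * S = 1 ↔ W = E⁻¹ := by
    constructor
    · intro h
      calc W = (S⁻¹ * S) * W * (S * S⁻¹) := by rw [hSinv, hSinv', one_mul, mul_one]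
        _ = S⁻¹ * (S * W * S) * S⁻¹ := by simp only [mul_assoc]
        _ = S⁻¹ * S⁻¹ := by rw [h, mul_one]
        _ = (S * S)⁻¹ := (Matrix.mul_inv_rev S S).symm
        _ = E⁻¹ := by rw [hSS]
    · intro h
      rw [h, ← hSS, Matrix.mul_inv_rev]
      calc S * (S⁻¹ * S⁻¹) * S = (S * S⁻¹) * (S⁻¹ * S) := by simp only [mul_assoc]
        _ = 1 := by rw [hSinv, hSinv', one_mul]
  constructor
  · linarith [hineq, hrel]
  · constructor
    · intro h
      have : (S * W * S).trace.re - Real.log (S * W * S).det.re = (N : ℝ) := by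
        rw [hrel]; linarith
      exact hWE.1 (hiff.1 this)
    · intro h
      have h1 : S * W * S = 1 := hWE.2 h
      have := hiff.2 h1
      rw [hrel] at this
      linarith
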